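/- Let B be an n×n real constant row-sum matrix. Then τ_∞(B) = ρ̂(B). -/

import Mathlib

open Matrix
open scoped ENNReal

/-- Non-increasing (descending) sort of a list of reals. -/
noncomputable def sortDesc (l : List ℝ) : List ℝ := (l.insertionSort (· ≤ ·)).reverse

/-- Given the descending rearrangement `l` of `n` numbers, the sum of the largest
(about) half minus the sum of the smallest (about) half, skipping the middle
element when `n` is odd. -/
noncomputable def halfSumDiff (n : ℕ) (l : List ℝ) : ℝ :=
  if n % 2 = 1 then (l.take ((n - 1) / 2)).sum - (l.drop ((n + 1) / 2)).sum
  else (l.take (n / 2)).sum - (l.drop (n / 2)).sum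

/-- Radius of the `i`-th Gershgorin disc of the second type of `M`, computed from
the `i`-th row of `M` with the diagonal entry replaced by `0`. -/
noncomputable def secondTypeRadius {n : ℕ} (M : Matrix (Fin n) (Fin n) ℝ) (i : Fin n) : ℝ :=
  halfSumDiff n (sortDesc (List.ofFn fun j : Fin n => if j = i then 0 else M i j))

/-- The `i`-th Gershgorin disc of the second type of `M`. -/
noncomputable def secondTypeDisc {n : ℕ} (M : Matrix (Fin n) (Fin n) ℝ) (i : Fin n) : Set ℂ :=
  Metric.closedBall ((M i i : ℝ) : ℂ) (secondTypeRadius M i)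

/-- The Gershgorin region of the second type of `M`. -/
noncomputable def secondTypeRegion {n : ℕ} (M : Matrix (Fin n) (Fin n) ℝ) : Set ℂ :=
  ⋃ i : Fin n, secondTypeDisc M i

/-- `μ` is a (complex) eigenvalue of the real matrix `A`, i.e. a complex root of
its characteristic polynomial. -/
def IsEigenvalueC {n : ℕ} (A : Matrix (Fin n) (Fin n) ℝ) (μ : ℂ) : Prop :=
  ((A.map ((↑) : ℝ → ℂ)).charpoly).IsRoot μ

/-- The `k`-th largest element (1-indexed) among the `n - 1` off-diagonal entries of
column `j` of `B`. -/
noncomputable def kthLargestOffDiag {n : ℕ} (B : Matrix (Fin n) (Fin n) ℝ) (j : Fin n)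
    (k : ℕ) : ℝ :=
  (sortDesc (((List.ofFn fun i : Fin n => B i j).eraseIdx j.val))).getD (k - 1) 0

/-- The ℓ_p norm of a vector in ℝ^n. -/
noncomputable def lpNorm {n : ℕ} (p : ℝ≥0∞) (x : Fin n → ℝ) : ℝ :=
  @norm (PiLp p fun _ : Fin n => ℝ) _ ((WithLp.equiv p (∀ _ : Fin n, ℝ)).symm x)

/-- The seminorm-like quantity `τ_p(B)`: the supremum of `‖Bᵀ x‖_p` over all real
vectors `x` with `xᵀ e = 0` and `‖x‖_p = 1`. -/
noncomputable def tau {n : ℕ} (p : ℝ≥0∞) (B : Matrix (Fin n) (Fin n) ℝ) : ℝ :=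
  sSup { t : ℝ | ∃ x : Fin n → ℝ, (∑ i, x i) = 0 ∧ lpNorm p x = 1 ∧ t = lpNorm p (Bᵀ *ᵥ x) }

/-- The Ostrowski–Brauer set `Γ(M)` of a real square matrix `M`. -/
noncomputable def brauerSet {n : ℕ} (M : Matrix (Fin n) (Fin n) ℝ) : Set ℂ :=
  ⋃ (i : Fin n) (j : Fin n) (_ : i < j),
    { y : ℂ | ‖y - (M i i : ℝ)‖ * ‖y - (M j j : ℝ)‖ ≤
        (∑ k ∈ Finset.univ.filter fun k => k ≠ i, |M i k|) *
        (∑ k ∈ Finset.univ.filter fun k => k ≠ j, |M j k|) }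

/-- `cs_j(A)` from Definition 2.3: sorted column sums difference. -/
noncomputable def csCol {n : ℕ} (A : Matrix (Fin n) (Fin n) ℝ) (j : Fin n) : ℝ :=
  halfSumDiff n (sortDesc (List.ofFn fun i : Fin n => A i j))

private lemma cardlt (n a : ℕ) (ha : a ≤ n) :
    ((Finset.univ : Finset (Fin n)).filter fun k : Fin n => (k : ℕ) < a).card = a := by
  rw [Finset.card_filter]
  rw [Fin.sum_univ_eq_sum_range (fun i => if i < a then 1 else 0) n]
  rw [← Finset.card_filter]
  have hfr : ((Finset.range n).filter fun i => i < a) = Finset.range a := by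
    ext i; simp only [Finset.mem_filter, Finset.mem_range]; omega
  rw [hfr, Finset.card_range]

private lemma key {n : ℕ} (hn : 0 < n) (c : Fin n → ℝ) :
    ∃ m : ℝ, halfSumDiff n (sortDesc (List.ofFn c)) = ∑ i, |c i - m| ∧
      ∃ x : Fin n → ℝ, (∑ i, x i) = 0 ∧ (∀ i, |x i| ≤ 1) ∧ (2 ≤ n → ∃ i, x i = -1) ∧
        (∑ i, c i * x i) = ∑ i, |c i - m| := by
  set σ := Tuple.sort c with hσ
  set asc : Fin n → ℝ := c ∘ σ with hasc
  have hmono : Monotone asc := Tuple.monotone_sort c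
  set mid : Fin n := ⟨n / 2, Nat.div_lt_self hn one_lt_two⟩ with hmid
  set m := asc mid with hm
  have hhalf : n / 2 ≤ n - n / 2 := by omega
  -- ordering facts
  have hlow : ∀ k : Fin n, (k : ℕ) < n / 2 → asc k ≤ m := by
    intro k hk; exact hmono (by simp [Fin.le_def, hmid]; omega)
  have hhigh : ∀ k : Fin n, n - n / 2 ≤ (k : ℕ) → m ≤ asc k := by
    intro k hk; exact hmono (by simp [Fin.le_def, hmid]; omega)
  have hmidcase : ∀ k : Fin n, ¬((k : ℕ) < n / 2) → ¬(n - n / 2 ≤ (k : ℕ)) → asc k = m := by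
    intro k h1 h2
    have : k = mid := by apply Fin.ext; simp [hmid]; omega
    rw [this]
  -- sorted list identification
  have hsd : sortDesc (List.ofFn c) = (List.ofFn asc).reverse := by
    unfold sortDesc
    congr 1
    refine List.Perm.eq_of_pairwise' (List.pairwise_insertionSort _ _) hmono.sortedLE_ofFn.pairwise ?_
    exact (List.perm_insertionSort _ _).trans (σ.ofFn_comp_perm c).symm
  set T : ℕ → ℝ := fun a => ∑ k ∈ Finset.univ.filter fun k : Fin n => (k : ℕ) < a, asc k with hT
  set S : ℝ := ∑ k, asc k with hS
  have hsum_ofFn : (List.ofFn asc).sum = S := List.sum_ofFn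
  have htakeofFn : ∀ a, ((List.ofFn asc).take a).sum = T a := fun a => List.sum_take_ofFn asc a
  have hLsum : ((List.ofFn asc).reverse).sum = S := by rw [List.sum_reverse, hsum_ofFn]
  have htake : ∀ a, (((List.ofFn asc).reverse).take a).sum = S - T (n - a) := by
    intro a
    rw [List.take_reverse, List.sum_reverse, List.length_ofFn]
    have h := List.sum_take_add_sum_drop (List.ofFn asc) ((List.ofFn asc).length - a)
    rw [hsum_ofFn, htakeofFn, List.length_ofFn] at h
    linarith [h]
  have hdrop : ∀ a, (((List.ofFn asc).reverse).drop a).sum = T (n - a) := by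
    intro a
    have := List.sum_take_add_sum_drop ((List.ofFn asc).reverse) a
    rw [hLsum, htake a] at this
    linarith
  -- halfSumDiff value
  have hhsd : halfSumDiff n (sortDesc (List.ofFn c)) = (S - T (n - n / 2)) - T (n / 2) := by
    rw [hsd]
    unfold halfSumDiff
    rcases Nat.even_or_odd n with he | ho
    · have h2 : n % 2 = 0 := Nat.even_iff.mp he
      rw [if_neg (by omega)]
      rw [htake, hdrop]
      have e1 : n - n / 2 = n / 2 := by omega
      rw [e1]
    · have h2 : n % 2 = 1 := Nat.odd_iff.mp ho
      rw [if_pos h2]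
      rw [htake, hdrop]
      have e1 : n - (n - 1) / 2 = n - n / 2 := by omega
      have e2 : n - (n + 1) / 2 = n / 2 := by omega
      rw [e1, e2]
  -- cardinalities
  have hcardG : ((Finset.univ : Finset (Fin n)).filter fun k : Fin n => (k : ℕ) < n / 2).card
      = n / 2 := cardlt n _ (by omega)
  have hcardH : ((Finset.univ : Finset (Fin n)).filter fun k : Fin n => ¬((k : ℕ) < n - n / 2)).card
      = n / 2 := by
    have := Finset.card_filter_add_card_filter_not
      (s := (Finset.univ : Finset (Fin n))) (p := fun k : Fin n => (k : ℕ) < n - n / 2)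
    rw [cardlt n _ (by omega)] at this
    simp only [Finset.card_univ, Fintype.card_fin] at this
    omega
  have hsplitS : T (n - n / 2) +
      ∑ k ∈ Finset.univ.filter (fun k : Fin n => ¬((k : ℕ) < n - n / 2)), asc k = S :=
    Finset.sum_filter_add_sum_filter_not _ _ asc
  -- the median absolute sum
  have habs : ∀ k : Fin n, |asc k - m| =
      (if ¬((k : ℕ) < n - n / 2) then asc k - m else 0) +
      (if (k : ℕ) < n / 2 then m - asc k else 0) := by
    intro k
    by_cases h1 : (k : ℕ) < n / 2
    · rw [if_pos h1, if_neg (by omega), abs_of_nonpos (by linarith [hlow k h1])]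
      ring
    · by_cases h2 : n - n / 2 ≤ (k : ℕ)
      · rw [if_pos (by omega), if_neg h1, abs_of_nonneg (by linarith [hhigh k h2])]
        ring
      · rw [if_neg (by omega), if_neg h1, hmidcase k h1 (by omega)]
        simp
  have habs_sum : ∀ d : Fin n → ℝ, (∀ k, d (σ k) = asc k) → ∑ i, |d i| = ∑ k, |asc k - m| → True := fun _ _ _ => trivial
  have hsum_abs : (∑ k, |asc k - m|) = (S - T (n - n / 2)) - T (n / 2) := by
    calc ∑ k, |asc k - m|
        = ∑ k : Fin n, ((if ¬((k : ℕ) < n - n / 2) then asc k - m else 0) +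
            (if (k : ℕ) < n / 2 then m - asc k else 0)) := by
          exact Finset.sum_congr rfl fun k _ => habs k
      _ = (∑ k ∈ Finset.univ.filter (fun k : Fin n => ¬((k : ℕ) < n - n / 2)), (asc k - m)) +
          (∑ k ∈ Finset.univ.filter (fun k : Fin n => (k : ℕ) < n / 2), (m - asc k)) := by
          rw [Finset.sum_add_distrib, Finset.sum_filter, Finset.sum_filter]
      _ = (S - T (n - n / 2)) - T (n / 2) := by
          rw [Finset.sum_sub_distrib, Finset.sum_sub_distrib, Finset.sum_const, Finset.sum_const,
            hcardG, hcardH]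
          have := hsplitS
          simp only [nsmul_eq_mul]
          linarith
  have hccomp : ∀ i : Fin n, c i - m = (fun i => c i - m) i := fun _ => rfl
  have hsum_c : (∑ i, |c i - m|) = ∑ k, |asc k - m| := by
    rw [← Equiv.sum_comp σ (fun i => |c i - m|)]
    rfl
  refine ⟨m, by rw [hhsd, hsum_c, hsum_abs], ?_⟩
  -- construction
  set g : Fin n → ℝ := fun k => if (k : ℕ) < n / 2 then -1 else
    if n - n / 2 ≤ (k : ℕ) then 1 else 0 with hg
  have hgsplit : ∀ k : Fin n, g k =
      (if ¬((k : ℕ) < n - n / 2) then (1:ℝ) else 0) +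
      (if (k : ℕ) < n / 2 then -1 else 0) := by
    intro k
    simp only [hg]
    by_cases h1 : (k : ℕ) < n / 2
    · rw [if_pos h1, if_pos h1, if_neg (show ¬¬((k:ℕ) < n - n/2) by omega)]
      ring
    · by_cases h2 : n - n / 2 ≤ (k : ℕ)
      · rw [if_neg h1, if_pos h2, if_neg h1, if_pos (show ¬((k:ℕ) < n - n/2) by omega)]
        ring
      · rw [if_neg h1, if_neg h2, if_neg h1, if_neg (show ¬¬((k:ℕ) < n - n/2) by omega)]
        ring
  have hg0 : ∑ k, g k = 0 := by
    calc ∑ k, g k = ∑ k : Fin n, ((if ¬((k : ℕ) < n - n / 2) then (1:ℝ) else 0) +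
        (if (k : ℕ) < n / 2 then (-1:ℝ) else 0)) := Finset.sum_congr rfl fun k _ => hgsplit k
      _ = 0 := by
        rw [Finset.sum_add_distrib, ← Finset.sum_filter, ← Finset.sum_filter,
          Finset.sum_const, Finset.sum_const, hcardG, hcardH]
        simp
  refine ⟨g ∘ σ.symm, ?_, ?_, ?_, ?_⟩
  · simp only [Function.comp_apply]
    rw [Equiv.sum_comp σ.symm g]; exact hg0
  · intro i
    simp only [Function.comp_apply, hg]
    split_ifs <;> norm_num
  · intro h2n
    refine ⟨σ ⟨0, hn⟩, ?_⟩
    simp only [Function.comp_apply, Equiv.symm_apply_apply, hg]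
    rw [if_pos (show ((⟨0, hn⟩ : Fin n) : ℕ) < n / 2 by simp; omega)]
  · have e1 : ∑ i, c i * (g ∘ σ.symm) i
        = ∑ i, (c i - m) * (g ∘ σ.symm) i + m * ∑ i, (g ∘ σ.symm) i := by
      rw [Finset.mul_sum, ← Finset.sum_add_distrib]
      exact Finset.sum_congr rfl fun i _ => by ring
    have hx0 : ∑ i, (g ∘ σ.symm) i = 0 := by
      simp only [Function.comp_apply]
      rw [Equiv.sum_comp σ.symm g]; exact hg0
    rw [e1, hx0, mul_zero, add_zero]
    rw [← Equiv.sum_comp σ (fun i => (c i - m) * (g ∘ σ.symm) i)]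
    rw [hsum_c]
    refine Finset.sum_congr rfl fun k _ => ?_
    simp only [Function.comp_apply, Equiv.symm_apply_apply]
    have hck : c (σ k) = asc k := rfl
    by_cases h1 : (k : ℕ) < n / 2
    · rw [hg]; simp only [if_pos h1]
      rw [abs_of_nonpos (by linarith [hlow k h1])]
      rw [hck]; ring
    · by_cases h2 : n - n / 2 ≤ (k : ℕ)
      · rw [hg]; simp only [if_neg h1, if_pos h2]
        rw [abs_of_nonneg (by linarith [hhigh k h2])]
        rw [hck]; ring
      · rw [hg]; simp only [if_neg h1, if_neg (by omega : ¬(n - n / 2 ≤ (k : ℕ)))]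
        rw [hck, hmidcase k h1 (by omega)]
        simp

private lemma ub {n : ℕ} (c x : Fin n → ℝ) (m : ℝ) (hx0 : ∑ i, x i = 0)
    (hx1 : ∀ i, |x i| ≤ 1) : |∑ i, c i * x i| ≤ ∑ i, |c i - m| := by
  have e1 : ∑ i, c i * x i = ∑ i, (c i - m) * x i := by
    have : ∑ i, c i * x i = ∑ i, (c i - m) * x i + m * ∑ i, x i := by
      rw [Finset.mul_sum, ← Finset.sum_add_distrib]
      exact Finset.sum_congr rfl fun i _ => by ring
    rw [this, hx0, mul_zero, add_zero]
  rw [e1]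
  calc |∑ i, (c i - m) * x i| ≤ ∑ i, |(c i - m) * x i| := Finset.abs_sum_le_sum_abs _ _
    _ ≤ ∑ i, |c i - m| := by
      refine Finset.sum_le_sum fun i _ => ?_
      rw [abs_mul]
      exact mul_le_of_le_one_right (abs_nonneg _) (hx1 i)

/-- `τ_∞(B) = ρ̂(B)` for a constant row-sum matrix `B`, where
`ρ̂(B) = max_j cs_j(B)`. -/
theorem stmt18 {n : ℕ} (hn : 0 < n) (B : Matrix (Fin n) (Fin n) ℝ)
    (lamt : ℝ) (hB : B *ᵥ (1 : Fin n → ℝ) = lamt • (1 : Fin n → ℝ)) :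
    tau ⊤ B =
      Finset.univ.sup' ⟨(⟨0, hn⟩ : Fin n), Finset.mem_univ _⟩ (fun j => csCol B j) := by
  haveI : Nonempty (Fin n) := ⟨⟨0, hn⟩⟩
  set M := Finset.univ.sup' ⟨(⟨0, hn⟩ : Fin n), Finset.mem_univ _⟩ (fun j => csCol B j) with hM
  have hlp : ∀ y : Fin n → ℝ, lpNorm ⊤ y = ⨆ i, |y i| := by
    intro y
    rw [lpNorm, PiLp.norm_eq_ciSup]
    simp only [WithLp.equiv_symm_apply, PiLp.toLp_apply, WithLp.ofLp_toLp, Real.norm_eq_abs]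
  have hmv : ∀ (x : Fin n → ℝ) (j : Fin n), (Bᵀ *ᵥ x) j = ∑ i, B i j * x i := by
    intro x j
    simp [Matrix.mulVec, dotProduct, Matrix.transpose_apply, mul_comm]
  have hkey : ∀ j : Fin n, ∃ m : ℝ, csCol B j = ∑ i, |B i j - m| ∧
      ∃ x : Fin n → ℝ, (∑ i, x i) = 0 ∧ (∀ i, |x i| ≤ 1) ∧ (2 ≤ n → ∃ i, x i = -1) ∧
        (∑ i, B i j * x i) = ∑ i, |B i j - m| := fun j => key hn fun i => B i j
  have hM0 : 0 ≤ M := by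
    obtain ⟨m, hm, -⟩ := hkey ⟨0, hn⟩
    refine le_trans ?_ (Finset.le_sup' _ (Finset.mem_univ (⟨0, hn⟩ : Fin n)))
    rw [hm]
    exact Finset.sum_nonneg fun i _ => abs_nonneg _
  have hub : ∀ t ∈ { t : ℝ | ∃ x : Fin n → ℝ, (∑ i, x i) = 0 ∧ lpNorm ⊤ x = 1 ∧
      t = lpNorm ⊤ (Bᵀ *ᵥ x) }, t ≤ M := by
    rintro t ⟨x, hx0, hx1, rfl⟩
    have hxb : ∀ i, |x i| ≤ 1 := by
      intro i
      rw [hlp] at hx1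
      calc |x i| ≤ ⨆ i, |x i| := le_ciSup (f := fun i => |x i|) (Finite.bddAbove_range _) i
        _ = 1 := hx1
    rw [hlp]
    refine ciSup_le fun j => ?_
    obtain ⟨m, hm, -⟩ := hkey j
    calc |(Bᵀ *ᵥ x) j| = |∑ i, B i j * x i| := by rw [hmv]
      _ ≤ ∑ i, |B i j - m| := ub _ _ _ hx0 hxb
      _ = csCol B j := hm.symm
      _ ≤ M := Finset.le_sup' _ (Finset.mem_univ j)
  refine le_antisymm (Real.sSup_le hub hM0) ?_
  by_cases hn2 : 2 ≤ n
  · obtain ⟨j0, -, hj0⟩ := Finset.exists_mem_eq_sup'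
      (⟨(⟨0, hn⟩ : Fin n), Finset.mem_univ _⟩ : (Finset.univ : Finset (Fin n)).Nonempty)
      (fun j => csCol B j)
    obtain ⟨m, hm, x, hx0, hxb, hex, hsum⟩ := hkey j0
    obtain ⟨i0, hi0⟩ := hex hn2
    have hxnorm : lpNorm ⊤ x = 1 := by
      rw [hlp]
      refine le_antisymm (ciSup_le hxb) ?_
      have : |x i0| ≤ ⨆ i, |x i| := le_ciSup (f := fun i => |x i|) (Finite.bddAbove_range _) i0
      rw [hi0] at this
      simpa using this
    have hmem : lpNorm ⊤ (Bᵀ *ᵥ x) ∈ { t : ℝ | ∃ x : Fin n → ℝ, (∑ i, x i) = 0 ∧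
        lpNorm ⊤ x = 1 ∧ t = lpNorm ⊤ (Bᵀ *ᵥ x) } := ⟨x, hx0, hxnorm, rfl⟩
    have hMle : M ≤ lpNorm ⊤ (Bᵀ *ᵥ x) := by
      have h1 : (Bᵀ *ᵥ x) j0 = M := by
        rw [hmv, hsum, ← hm, hM]; exact hj0.symm
      have h2 : |(Bᵀ *ᵥ x) j0| ≤ ⨆ j, |(Bᵀ *ᵥ x) j| :=
        le_ciSup (f := fun j => |(Bᵀ *ᵥ x) j|) (Finite.bddAbove_range _) j0
      rw [hlp]
      rw [h1, abs_of_nonneg hM0] at h2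
      exact h2
    exact le_trans hMle (le_csSup ⟨M, hub⟩ hmem)
  · -- n = 1
    have hn1 : n = 1 := by omega
    subst hn1
    have hempty : { t : ℝ | ∃ x : Fin 1 → ℝ, (∑ i, x i) = 0 ∧ lpNorm ⊤ x = 1 ∧
        t = lpNorm ⊤ (Bᵀ *ᵥ x) } = ∅ := by
      ext t
      simp only [Set.mem_setOf_eq, Set.mem_empty_iff_false, iff_false]
      rintro ⟨x, hx0, hx1, -⟩
      rw [Fin.sum_univ_one] at hx0
      rw [hlp] at hx1
      have : ∀ i : Fin 1, |x i| = 0 := by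
        intro i
        rw [Fin.eq_zero i, hx0, abs_zero]
      simp only [this, ciSup_const] at hx1
      norm_num at hx1
    have hM0' : M = 0 := by
      rw [hM]
      have : ∀ j : Fin 1, csCol B j = 0 := by
        intro j
        obtain ⟨m, hm, x, hx0, -, -, hsum⟩ := hkey j
        rw [hm, ← hsum, Fin.sum_univ_one]
        rw [Fin.sum_univ_one] at hx0
        rw [hx0, mul_zero]
      simp [this]
    rw [tau, hempty, Real.sSup_empty, hM0']
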